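/- Suppose ℓ = 2 and let n be an integer not divisible by 2^f + 1. Then N(n) = 2^f − 1 if f is even; N(n) = 2^f if f is odd and 3 does not divide n; and N(n) = 2^f − 3 if f is odd and 3 divides n. -/

import Mathlib

namespace Stmt9

/-- The set `T(n)` (with `ℓ = 2`) of triples `(a,b,B)` with `a ∈ {0,…,2^f−2}`,
`b ∈ {1,2}^f`, `B ⊆ {0,…,f−1}` and
`n ≡ a(2^f+1) + ∑_{i∈B} b_i 2^i + ∑_{i∉B} b_i 2^{f+i} (mod 2^{2f}−1)`. -/
def Tset (f : ℕ) (n : ℤ) : Set (ℤ × (Fin f → ℤ) × Finset (Fin f)) :=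
  {x | (0 ≤ x.1 ∧ x.1 ≤ (2 : ℤ) ^ f - 2) ∧
    (∀ i, 1 ≤ x.2.1 i ∧ x.2.1 i ≤ (2 : ℤ)) ∧
    Int.ModEq ((2 : ℤ) ^ (2 * f) - 1) n
      (x.1 * ((2 : ℤ) ^ f + 1) + ∑ i ∈ x.2.2, x.2.1 i * (2 : ℤ) ^ (i : ℕ) +
        ∑ i ∈ x.2.2ᶜ, x.2.1 i * (2 : ℤ) ^ (f + (i : ℕ)))}

set_option linter.unnecessarySeqFocus false

def T1 (f : ℕ) (n : ℤ) : Set ((Fin f → ℤ) × Finset (Fin f)) :=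
  {y | (∀ i, 1 ≤ y.1 i ∧ y.1 i ≤ (2 : ℤ)) ∧
    Int.ModEq ((2 : ℤ) ^ f + 1) n
      (∑ i ∈ y.2, y.1 i * (2 : ℤ) ^ (i : ℕ) - ∑ i ∈ y.2ᶜ, y.1 i * (2 : ℤ) ^ (i : ℕ))}

def T2 (f : ℕ) (n : ℤ) : Set (Finset (Fin f) × Finset (Fin f)) :=
  {p | Int.ModEq ((2:ℤ)^f + 1) (n + 2*((2:ℤ)^f - 1))
      (∑ i ∈ p.1, (2:ℤ)^(i:ℕ) + 3 * ∑ i ∈ p.2, (2:ℤ)^(i:ℕ))}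

def T3 (f : ℕ) (n : ℤ) : Set ℤ :=
  {v | 0 ≤ v ∧ v ≤ (2:ℤ)^f - 1 ∧
    ¬ ((3*v) % ((2:ℤ)^f + 1) = (n + 2*((2:ℤ)^f - 1) + 1) % ((2:ℤ)^f + 1))}

lemma bitIndices_sum (U : Finset ℕ) :
    (∑ i ∈ U, 2 ^ i).bitIndices = U.sort (·≤·) := by
  have h : (∑ i ∈ U, 2 ^ i) = ((U.sort (·≤·)).map (fun i => 2 ^ i)).sum := by
    rw [Finset.sum, ← Finset.sort_eq U (·≤·)]; rfl
  rw [h, Nat.bitIndices_twoPowsum (Finset.sortedLT_sort U)]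

lemma sum_two_pow_inj {U V : Finset ℕ} (h : ∑ i ∈ U, 2 ^ i = ∑ i ∈ V, 2 ^ i) : U = V := by
  have h1 : U.sort (·≤·) = V.sort (·≤·) := by
    rw [← bitIndices_sum U, ← bitIndices_sum V, h]
  have h2 := congrArg (fun l => List.toFinset l) h1
  simpa only [Finset.sort_toFinset] using h2

lemma sum_two_pow_lt (f : ℕ) (U : Finset ℕ) (hU : ∀ i ∈ U, i < f) :
    ∑ i ∈ U, 2 ^ i < 2 ^ f := by
  calc ∑ i ∈ U, 2 ^ i ≤ ∑ i ∈ Finset.range f, 2 ^ i :=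
        Finset.sum_le_sum_of_subset (fun i hi => Finset.mem_range.2 (hU i hi))
    _ < 2 ^ f := by
        have := Nat.geomSum_eq (le_refl 2) f
        have : (1:ℕ) ≤ 2^f := Nat.one_le_two_pow
        omega

lemma sum_two_pow_int {f : ℕ} (U : Finset (Fin f)) :
    ∑ i ∈ U, (2:ℤ) ^ (i:ℕ) = ((∑ i ∈ U.map Fin.valEmbedding, 2 ^ i : ℕ) : ℤ) := by
  rw [Finset.sum_map]
  push_cast
  rfl

lemma sum_two_pow_int_nonneg {f : ℕ} (U : Finset (Fin f)) :
    0 ≤ ∑ i ∈ U, (2:ℤ) ^ (i:ℕ) := by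
  rw [sum_two_pow_int]; positivity

lemma sum_two_pow_int_le {f : ℕ} (U : Finset (Fin f)) :
    ∑ i ∈ U, (2:ℤ) ^ (i:ℕ) ≤ 2 ^ f - 1 := by
  rw [sum_two_pow_int]
  have h1 := sum_two_pow_lt f (U.map Fin.valEmbedding) (by
    intro i hi; obtain ⟨j, _, rfl⟩ := Finset.mem_map.1 hi; exact j.isLt)
  have h2 : ((∑ i ∈ U.map Fin.valEmbedding, 2 ^ i : ℕ) : ℤ) < ((2^f : ℕ) : ℤ) := by
    exact_mod_cast h1
  have h3 : ((2^f : ℕ) : ℤ) = 2 ^ f := by push_cast; ring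
  omega

lemma sum_two_pow_fin_inj {f : ℕ} {U V : Finset (Fin f)}
    (h : ∑ i ∈ U, (2:ℤ) ^ (i:ℕ) = ∑ i ∈ V, (2:ℤ) ^ (i:ℕ)) : U = V := by
  rw [sum_two_pow_int, sum_two_pow_int] at h
  exact Finset.map_injective _ (sum_two_pow_inj (by exact_mod_cast h))

lemma exists_finset_sum (f : ℕ) (u : ℤ) (h0 : 0 ≤ u) (h1 : u ≤ 2^f - 1) :
    ∃ U : Finset (Fin f), ∑ i ∈ U, (2:ℤ) ^ (i:ℕ) = u := by
  set un := u.toNat with hun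
  have hu : (un : ℤ) = u := Int.toNat_of_nonneg h0
  have hlt : un < 2 ^ f := by
    have h3 : ((2^f : ℕ) : ℤ) = 2 ^ f := by push_cast; ring
    have : ((un:ℤ)) < ((2^f : ℕ):ℤ) := by omega
    exact_mod_cast this
  have hmem : ∀ i ∈ un.bitIndices.toFinset, i < f := by
    intro i hi
    rw [List.mem_toFinset] at hi
    have := Nat.two_pow_le_of_mem_bitIndices hi
    by_contra hc
    push_neg at hc
    have : 2 ^ f ≤ 2 ^ i := Nat.pow_le_pow_right (by norm_num) hc
    omega
  refine ⟨(un.bitIndices.toFinset).attachFin hmem, ?_⟩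
  have hmap : ((un.bitIndices.toFinset).attachFin hmem).map Fin.valEmbedding
      = un.bitIndices.toFinset := by
    ext j
    simp only [Finset.mem_map, Fin.valEmbedding_apply]
    constructor
    · rintro ⟨a, ha, rfl⟩; exact (Finset.mem_attachFin hmem).1 ha
    · intro hj; exact ⟨⟨j, hmem j hj⟩, (Finset.mem_attachFin hmem).2 hj, rfl⟩
  rw [sum_two_pow_int, hmap]
  have hsum : ∑ i ∈ un.bitIndices.toFinset, 2 ^ i = un := by
    have hnd : un.bitIndices.Nodup := Nat.bitIndices_sorted.nodup
    rw [List.sum_toFinset _ hnd, Nat.twoPowSum_bitIndices]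
  rw [hsum, hu]


lemma geom2 (f : ℕ) : ∑ i ∈ Finset.range f, (2:ℤ)^i = 2^f - 1 := by
  induction f with
  | zero => simp
  | succ k ih => rw [Finset.sum_range_succ, ih]; ring

lemma geom2fin (f : ℕ) : ∑ i : Fin f, (2:ℤ)^(i:ℕ) = 2^f - 1 := by
  rw [Fin.sum_univ_eq_sum_range (fun i => (2:ℤ)^i) f]
  exact geom2 f

/-- In any window of length `d` there is exactly one element in each residue class. -/
lemma filter_Ico_modeq (d a c : ℤ) (hd : 0 < d) :
    (Finset.Ico a (a + d)).filter (fun v => v % d = c % d) = {a + (c - a) % d} := by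
  ext v
  simp only [Finset.mem_filter, Finset.mem_Ico, Finset.mem_singleton]
  have h0 : 0 ≤ (c - a) % d := Int.emod_nonneg _ (ne_of_gt hd)
  have h1 : (c - a) % d < d := Int.emod_lt_of_pos _ hd
  constructor
  · rintro ⟨⟨ha, hb⟩, h3⟩
    have h4 : (v - a) % d = (c - a) % d := Int.ModEq.sub_right a h3
    have h5 : (v - a) % d = v - a := Int.emod_eq_of_lt (by omega) (by omega)
    omega
  · rintro rfl
    refine ⟨⟨by omega, by omega⟩, ?_⟩
    have h2 : (a + (c - a) % d) % d = (a + (c - a)) % d :=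
      Int.ModEq.add_left a (Int.emod_emod_of_dvd _ dvd_rfl)
    rw [h2]
    ring_nf

lemma card_filter_Ico_modeq (d a c : ℤ) (hd : 0 < d) :
    ((Finset.Ico a (a + d)).filter (fun v => v % d = c % d)).card = 1 := by
  rw [filter_Ico_modeq d a c hd]; rfl


-- unique solution of 3v ≡ c when 3 invertible
lemma card_filter_three_inv (q c x : ℤ) (hq : 0 < q) (hx : (3*x) % q = 1 % q) :
    ((Finset.Ico (0:ℤ) q).filter (fun v => (3*v) % q = c % q)).card = 1 := by
  have hfe : (Finset.Ico (0:ℤ) q).filter (fun v => (3*v) % q = c % q)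
      = (Finset.Ico (0:ℤ) q).filter (fun v => v % q = (x*c) % q) := by
    apply Finset.filter_congr
    intro v _
    constructor
    · intro h
      have h1 : x*(3*v) ≡ x*c [ZMOD q] := Int.ModEq.mul_left x h
      have h2 : (3*x)*v ≡ 1*v [ZMOD q] := Int.ModEq.mul_right v hx
      calc v ≡ 1*v [ZMOD q] := by rw [one_mul]
        _ ≡ (3*x)*v [ZMOD q] := h2.symm
        _ ≡ x*c [ZMOD q] := by rw [show (3*x)*v = x*(3*v) by ring]; exact h1
    · intro h
      have h1 : 3*v ≡ 3*(x*c) [ZMOD q] := Int.ModEq.mul_left 3 h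
      have h2 : (3*x)*c ≡ 1*c [ZMOD q] := Int.ModEq.mul_right c hx
      calc 3*v ≡ 3*(x*c) [ZMOD q] := h1
        _ ≡ 1*c [ZMOD q] := by rw [show 3*(x*c) = (3*x)*c by ring]; exact h2
        _ ≡ c [ZMOD q] := by rw [one_mul]
  rw [hfe]
  have := card_filter_Ico_modeq q 0 (x*c) hq
  rwa [zero_add] at this

-- three-window: residues mod d in [0, 3d)
lemma filter_three_window (d c : ℤ) (hd : 0 < d) :
    ((Finset.Ico (0:ℤ) (3*d)).filter (fun v => v % d = c % d)).card = 3 := by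
  have hsplit : Finset.Ico (0:ℤ) (3*d) = Finset.Ico (0:ℤ) d ∪ (Finset.Ico d (2*d) ∪ Finset.Ico (2*d) (3*d)) := by
    rw [Finset.Ico_union_Ico_eq_Ico (by omega) (by omega),
        Finset.Ico_union_Ico_eq_Ico (by omega) (by omega)]
  have e1 : (Finset.Ico (0:ℤ) d).filter (fun v => v % d = c % d) = {0 + (c - 0) % d} := by
    have := filter_Ico_modeq d 0 c hd; rwa [zero_add] at this
  have e2 : (Finset.Ico d (2*d)).filter (fun v => v % d = c % d) = {d + (c - d) % d} := by
    have := filter_Ico_modeq d d c hd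
    rwa [show d + d = 2*d by ring] at this
  have e3 : (Finset.Ico (2*d) (3*d)).filter (fun v => v % d = c % d) = {2*d + (c - 2*d) % d} := by
    have := filter_Ico_modeq d (2*d) c hd
    rwa [show 2*d + d = 3*d by ring] at this
  have h0 : 0 ≤ c % d := Int.emod_nonneg _ (ne_of_gt hd)
  have h1 : c % d < d := Int.emod_lt_of_pos _ hd
  have hc1 : (c - d) % d = c % d := Int.modEq_iff_dvd.2 ⟨1, by ring⟩
  have hc2 : (c - 2*d) % d = c % d := Int.modEq_iff_dvd.2 ⟨2, by ring⟩
  rw [hsplit, Finset.filter_union, Finset.filter_union, e1, e2, e3, hc1, hc2]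
  rw [Finset.card_union_of_disjoint, Finset.card_union_of_disjoint]
  · simp
  · simp only [Finset.disjoint_singleton]
    omega
  · simp only [Finset.disjoint_union_right, Finset.disjoint_singleton]
    constructor <;> simp <;> omega

-- no solution of 3v ≡ c when 3 ∣ q but ¬3∣c
lemma card_filter_three_nodvd (q c : ℤ) (h3q : (3:ℤ) ∣ q) (h3c : ¬ (3:ℤ) ∣ c) :
    ((Finset.Ico (0:ℤ) q).filter (fun v => (3*v) % q = c % q)).card = 0 := by
  rw [Finset.card_eq_zero, Finset.filter_eq_empty_iff]
  intro v _
  intro h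
  have : q ∣ c - 3*v := Int.ModEq.dvd h
  have : (3:ℤ) ∣ c - 3*v := dvd_trans h3q this
  omega

-- three solutions of 3v ≡ 3c' mod 3d
lemma card_filter_three_dvd (d c' : ℤ) (hd : 0 < d) :
    ((Finset.Ico (0:ℤ) (3*d)).filter (fun v => (3*v) % (3*d) = (3*c') % (3*d))).card = 3 := by
  have hfe : (Finset.Ico (0:ℤ) (3*d)).filter (fun v => (3*v) % (3*d) = (3*c') % (3*d))
      = (Finset.Ico (0:ℤ) (3*d)).filter (fun v => v % d = c' % d) := by
    apply Finset.filter_congr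
    intro v _
    constructor
    · intro h
      have : (3*d) ∣ (3*c' - 3*v) := Int.ModEq.dvd h
      obtain ⟨k, hk⟩ := this
      have hk' : (3:ℤ) * (c' - v) = 3 * (d * k) := by linear_combination hk
      have : d ∣ c' - v := ⟨k, mul_left_cancel₀ (by norm_num) hk'⟩
      exact (Int.modEq_iff_dvd.2 this)
    · intro h
      have : d ∣ c' - v := Int.ModEq.dvd h
      obtain ⟨k, hk⟩ := this
      have : (3*d) ∣ (3*c' - 3*v) := ⟨k, by linear_combination 3*hk⟩
      exact (Int.modEq_iff_dvd.2 this)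
  rw [hfe]
  exact filter_three_window d c' hd


lemma eq_of_modeq_of_lt {d a b : ℤ} (h : a % d = b % d) (ha : 0 ≤ a) (ha' : a < d)
    (hb : 0 ≤ b) (hb' : b < d) : a = b := by
  have h1 : a % d = a := Int.emod_eq_of_lt ha ha'
  have h2 : b % d = b := Int.emod_eq_of_lt hb hb'
  omega

lemma two_pow_ge {f : ℕ} (hf : 0 < f) : (2:ℤ) ≤ 2 ^ f := by
  calc (2:ℤ) = 2^1 := by norm_num
    _ ≤ 2^f := pow_le_pow_right₀ (by norm_num) hf

lemma sum_compl_pow (f : ℕ) (b : Fin f → ℤ) (B : Finset (Fin f)) :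
    ∑ i ∈ Bᶜ, b i * (2:ℤ) ^ (f + (i : ℕ)) = 2^f * ∑ i ∈ Bᶜ, b i * (2:ℤ) ^ (i:ℕ) := by
  rw [Finset.mul_sum]
  exact Finset.sum_congr rfl (fun i _ => by rw [pow_add]; ring)

lemma stepA (f : ℕ) (hf : 0 < f) (n : ℤ) : (Tset f n).ncard = (T1 f n).ncard := by
  have hq2 : (2:ℤ) ≤ 2^f := two_pow_ge hf
  have hM : (2:ℤ)^(2*f) - 1 = ((2:ℤ)^f + 1) * ((2:ℤ)^f + 1 - 2) := by
    rw [mul_comm 2 f, pow_mul]; ring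
  have hbij : Set.BijOn Prod.snd (Tset f n) (T1 f n) := by
    refine ⟨?_, ?_, ?_⟩
    · -- MapsTo
      rintro ⟨a, b, B⟩ ⟨⟨ha0, ha1⟩, hb, hcong⟩
      refine ⟨hb, ?_⟩
      have hdvd : ((2:ℤ)^f + 1) ∣ ((2:ℤ)^(2*f) - 1) := ⟨(2:ℤ)^f + 1 - 2, hM⟩
      have h1 : Int.ModEq ((2:ℤ)^f + 1) n
          (a * ((2:ℤ)^f + 1) + ∑ i ∈ B, b i * (2:ℤ)^(i:ℕ) + ∑ i ∈ Bᶜ, b i * (2:ℤ)^(f+(i:ℕ))) :=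
        hcong.of_dvd hdvd
      refine h1.trans (Int.modEq_iff_dvd.2 ?_)
      rw [sum_compl_pow]
      exact ⟨-a - ∑ i ∈ Bᶜ, b i * (2:ℤ)^(i:ℕ), by ring⟩
    · -- InjOn
      rintro ⟨a, y⟩ hx ⟨a', y'⟩ hx' hsnd
      simp only at hsnd
      obtain rfl : y = y' := hsnd
      obtain ⟨⟨ha0, ha1⟩, hb, hcong⟩ := hx
      obtain ⟨⟨ha0', ha1'⟩, hb', hcong'⟩ := hx'
      have hcong1 : Int.ModEq ((2:ℤ)^(2*f) - 1) n
          (a * ((2:ℤ)^f + 1) + ∑ i ∈ y.2, y.1 i * (2:ℤ)^(i:ℕ) +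
            ∑ i ∈ y.2ᶜ, y.1 i * (2:ℤ)^(f+(i:ℕ))) := hcong
      have hcong1' : Int.ModEq ((2:ℤ)^(2*f) - 1) n
          (a' * ((2:ℤ)^f + 1) + ∑ i ∈ y.2, y.1 i * (2:ℤ)^(i:ℕ) +
            ∑ i ∈ y.2ᶜ, y.1 i * (2:ℤ)^(f+(i:ℕ))) := hcong'
      obtain ⟨c, hc⟩ := (hcong1.symm.trans hcong1').dvd
      have h4 : ((2:ℤ)^f + 1 - 2) ∣ (a' - a) := by
        refine ⟨c, mul_left_cancel₀ (show (2:ℤ)^f + 1 ≠ 0 by positivity) ?_⟩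
        rw [hM] at hc
        linear_combination hc
      obtain ⟨k, hk⟩ := h4
      have hk0 : k = 0 := by
        by_contra hcne
        have ha0'' : (0:ℤ) ≤ a := ha0
        have ha1'' : a ≤ (2:ℤ)^f - 2 := ha1
        have hb0'' : (0:ℤ) ≤ a' := ha0'
        have hb1'' : a' ≤ (2:ℤ)^f - 2 := ha1'
        rcases (by omega : 1 ≤ k ∨ k ≤ -1) with h | h
        · nlinarith
        · nlinarith
      rw [hk0, mul_zero] at hk
      have : a = a' := by omega
      simp [this]
    · -- SurjOn
      rintro ⟨b, B⟩ ⟨hb, hcong⟩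
      have hS : Int.ModEq ((2:ℤ)^f + 1)
          (∑ i ∈ B, b i * (2:ℤ)^(i:ℕ) + ∑ i ∈ Bᶜ, b i * (2:ℤ)^(f+(i:ℕ)))
          (∑ i ∈ B, b i * (2:ℤ)^(i:ℕ) - ∑ i ∈ Bᶜ, b i * (2:ℤ)^(i:ℕ)) := by
        refine Int.modEq_iff_dvd.2 ?_
        rw [sum_compl_pow]
        exact ⟨-(∑ i ∈ Bᶜ, b i * (2:ℤ)^(i:ℕ)), by ring⟩
      have hcongc : Int.ModEq ((2:ℤ)^f + 1) n
          (∑ i ∈ B, b i * (2:ℤ)^(i:ℕ) - ∑ i ∈ Bᶜ, b i * (2:ℤ)^(i:ℕ)) := hcong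
      have hqd : ((2:ℤ)^f + 1) ∣
          (n - (∑ i ∈ B, b i * (2:ℤ)^(i:ℕ) + ∑ i ∈ Bᶜ, b i * (2:ℤ)^(f+(i:ℕ)))) := by
        obtain ⟨k, hk⟩ := (hcongc.trans hS.symm).dvd
        exact ⟨-k, by linarith⟩
      obtain ⟨k, hk⟩ := hqd
      set d : ℤ := (2:ℤ)^f + 1 - 2 with hd
      have hdpos : 0 < d := by omega
      have hcong2 : Int.ModEq ((2:ℤ)^(2*f) - 1) n
          ((k % d) * ((2:ℤ)^f + 1) + ∑ i ∈ B, b i * (2:ℤ)^(i:ℕ) +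
            ∑ i ∈ Bᶜ, b i * (2:ℤ)^(f+(i:ℕ))) := by
        refine Int.modEq_iff_dvd.2 ⟨-(k / d), ?_⟩
        rw [hM]
        have he : k % d = k - d * (k / d) := Int.emod_def k d
        linear_combination ((2:ℤ)^f + 1) * he - hk
      refine ⟨(k % d, b, B), ⟨⟨Int.emod_nonneg _ (ne_of_gt hdpos), ?_⟩, hb, hcong2⟩, rfl⟩
      have := Int.emod_lt_of_pos k hdpos
      omega
  rw [← hbij.image_eq, Set.ncard_image_of_injOn hbij.injOn]


lemma key_identity {f : ℕ} (b : Fin f → ℤ) (B : Finset (Fin f))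
    (hb : ∀ i, 1 ≤ b i ∧ b i ≤ (2:ℤ)) :
    ∑ i ∈ B, b i * (2:ℤ)^(i:ℕ) - ∑ i ∈ Bᶜ, b i * (2:ℤ)^(i:ℕ)
      = (∑ i ∈ Finset.univ.filter (fun i => if i ∈ B then b i = 2 else b i = 1), (2:ℤ)^(i:ℕ))
        + 3 * ∑ i ∈ B, (2:ℤ)^(i:ℕ) - 2 * ((2:ℤ)^f - 1) := by
  have hB : ∑ i ∈ B, b i * (2:ℤ)^(i:ℕ)
      = ∑ i ∈ B, ((if (if i ∈ B then b i = 2 else b i = 1) then (2:ℤ)^(i:ℕ) else 0)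
          + (2:ℤ)^(i:ℕ)) := by
    refine Finset.sum_congr rfl (fun i hi => ?_)
    simp only [hi, if_true]
    rcases (by have := hb i; omega : b i = 1 ∨ b i = 2) with h | h <;> rw [h] <;> norm_num <;> ring
  have hBc : ∑ i ∈ Bᶜ, b i * (2:ℤ)^(i:ℕ)
      = ∑ i ∈ Bᶜ, (2*(2:ℤ)^(i:ℕ)
          - (if (if i ∈ B then b i = 2 else b i = 1) then (2:ℤ)^(i:ℕ) else 0)) := by
    refine Finset.sum_congr rfl (fun i hi => ?_)
    have hiB : i ∉ B := Finset.mem_compl.1 hi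
    simp only [hiB, if_false]
    rcases (by have := hb i; omega : b i = 1 ∨ b i = 2) with h | h <;> rw [h] <;> norm_num <;> ring
  have hsplit2 : (2:ℤ)^f - 1 = ∑ i ∈ B, (2:ℤ)^(i:ℕ) + ∑ i ∈ Bᶜ, (2:ℤ)^(i:ℕ) := by
    rw [← geom2fin f, ← Finset.sum_add_sum_compl B]
  have hfil : ∑ i ∈ Finset.univ.filter (fun i => if i ∈ B then b i = 2 else b i = 1), (2:ℤ)^(i:ℕ)
      = ∑ i ∈ B, (if (if i ∈ B then b i = 2 else b i = 1) then (2:ℤ)^(i:ℕ) else 0)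
        + ∑ i ∈ Bᶜ, (if (if i ∈ B then b i = 2 else b i = 1) then (2:ℤ)^(i:ℕ) else 0) := by
    rw [Finset.sum_filter, ← Finset.sum_add_sum_compl B]
  rw [hB, hBc, Finset.sum_add_distrib, Finset.sum_sub_distrib, hsplit2, hfil, ← Finset.mul_sum]
  ring

lemma stepB (f : ℕ) (n : ℤ) : (T1 f n).ncard = (T2 f n).ncard := by
  classical
  set φ : ((Fin f → ℤ) × Finset (Fin f)) → (Finset (Fin f) × Finset (Fin f)) :=
    fun y => (Finset.univ.filter (fun i => if i ∈ y.2 then y.1 i = 2 else y.1 i = 1), y.2)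
    with hφ
  have hbij : Set.BijOn φ (T1 f n) (T2 f n) := by
    refine ⟨?_, ?_, ?_⟩
    · rintro y ⟨hb, hcong⟩
      have hid := key_identity y.1 y.2 hb
      have h2 : (∑ i ∈ y.2, y.1 i * (2:ℤ)^(i:ℕ) - ∑ i ∈ y.2ᶜ, y.1 i * (2:ℤ)^(i:ℕ))
          + 2 * ((2:ℤ)^f - 1)
          = (∑ i ∈ Finset.univ.filter (fun i => if i ∈ y.2 then y.1 i = 2 else y.1 i = 1),
              (2:ℤ)^(i:ℕ)) + 3 * ∑ i ∈ y.2, (2:ℤ)^(i:ℕ) := by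
        rw [hid]; ring
      have h3 := Int.ModEq.add_right (2*((2:ℤ)^f - 1)) hcong
      rw [h2] at h3
      exact h3
    · rintro y ⟨hb, _⟩ y' ⟨hb', _⟩ heq
      simp only [hφ, Prod.mk.injEq] at heq
      obtain ⟨hU, h2⟩ := heq
      have h1 : y.1 = y'.1 := by
        funext i
        have hiff : (if i ∈ y.2 then y.1 i = 2 else y.1 i = 1)
            ↔ (if i ∈ y'.2 then y'.1 i = 2 else y'.1 i = 1) := by
          simpa using Finset.ext_iff.1 hU i
        have hb1 := hb i
        have hb2 := hb' i
        by_cases hm : i ∈ y.2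
        · have hm' : i ∈ y'.2 := h2 ▸ hm
          rw [if_pos hm, if_pos hm'] at hiff
          omega
        · have hm' : i ∉ y'.2 := h2 ▸ hm
          rw [if_neg hm, if_neg hm'] at hiff
          omega
      exact Prod.ext h1 h2
    · rintro p hp
      have hp' : Int.ModEq ((2:ℤ)^f + 1) (n + 2*((2:ℤ)^f - 1))
          (∑ i ∈ p.1, (2:ℤ)^(i:ℕ) + 3 * ∑ i ∈ p.2, (2:ℤ)^(i:ℕ)) := hp
      set b : Fin f → ℤ := fun i =>
        if i ∈ p.2 then (if i ∈ p.1 then 2 else 1) else (if i ∈ p.1 then 1 else 2) with hbdef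
      have hbrange : ∀ i, 1 ≤ b i ∧ b i ≤ (2:ℤ) := by
        intro i
        by_cases h2 : i ∈ p.2 <;> by_cases h1 : i ∈ p.1 <;> simp [hbdef, h1, h2]
      have hUy : Finset.univ.filter (fun i => if i ∈ p.2 then b i = 2 else b i = 1) = p.1 := by
        ext i
        simp only [Finset.mem_filter, Finset.mem_univ, true_and]
        by_cases h2 : i ∈ p.2 <;> by_cases h1 : i ∈ p.1 <;> simp [hbdef, h1, h2]
      have hid := key_identity b p.2 hbrange
      rw [hUy] at hid
      have hc : Int.ModEq ((2:ℤ)^f + 1) n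
          ((∑ i ∈ p.1, (2:ℤ)^(i:ℕ)) + 3 * ∑ i ∈ p.2, (2:ℤ)^(i:ℕ) - 2*((2:ℤ)^f - 1)) := by
        have h4 := Int.ModEq.sub_right (2*((2:ℤ)^f - 1)) hp'
        have h5 : n + 2*((2:ℤ)^f - 1) - 2*((2:ℤ)^f - 1) = n := by ring
        rwa [h5] at h4
      rw [← hid] at hc
      refine ⟨(b, p.2), ⟨hbrange, hc⟩, ?_⟩
      simp only [hφ]
      exact Prod.ext hUy rfl
  rw [← hbij.image_eq, Set.ncard_image_of_injOn hbij.injOn]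


lemma stepC (f : ℕ) (hf : 0 < f) (n : ℤ) : (T2 f n).ncard = (T3 f n).ncard := by
  have hq2 : (2:ℤ) ≤ 2^f := by
    calc (2:ℤ) = 2^1 := by norm_num
      _ ≤ 2^f := pow_le_pow_right₀ (by norm_num) hf
  have hqpos : (0:ℤ) < 2^f + 1 := by positivity
  have hbij : Set.BijOn (fun p : Finset (Fin f) × Finset (Fin f) => ∑ i ∈ p.2, (2:ℤ)^(i:ℕ))
      (T2 f n) (T3 f n) := by
    refine ⟨?_, ?_, ?_⟩
    · rintro p hp
      have hp' : Int.ModEq ((2:ℤ)^f + 1) (n + 2*((2:ℤ)^f - 1))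
          (∑ i ∈ p.1, (2:ℤ)^(i:ℕ) + 3 * ∑ i ∈ p.2, (2:ℤ)^(i:ℕ)) := hp
      refine ⟨sum_two_pow_int_nonneg p.2, sum_two_pow_int_le p.2, ?_⟩
      intro h3
      obtain ⟨c1, hc1⟩ := hp'.dvd
      obtain ⟨c2, hc2⟩ := (Int.modEq_iff_dvd.1 h3)
      have hu0 := sum_two_pow_int_nonneg p.1
      have hu1 := sum_two_pow_int_le p.1
      have hdvd : ((2:ℤ)^f + 1) ∣ (∑ i ∈ p.1, (2:ℤ)^(i:ℕ) + 1) :=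
        ⟨c1 + c2, by linear_combination hc1 + hc2⟩
      have := Int.le_of_dvd (by omega) hdvd
      omega
    · rintro p hp p' hp' heq
      simp only at heq
      have hV : p.2 = p'.2 := sum_two_pow_fin_inj heq
      have hp1 : Int.ModEq ((2:ℤ)^f + 1) (n + 2*((2:ℤ)^f - 1))
          (∑ i ∈ p.1, (2:ℤ)^(i:ℕ) + 3 * ∑ i ∈ p.2, (2:ℤ)^(i:ℕ)) := hp
      have hp2 : Int.ModEq ((2:ℤ)^f + 1) (n + 2*((2:ℤ)^f - 1))
          (∑ i ∈ p'.1, (2:ℤ)^(i:ℕ) + 3 * ∑ i ∈ p'.2, (2:ℤ)^(i:ℕ)) := hp'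
      obtain ⟨c, hc⟩ := (hp1.symm.trans hp2).dvd
      rw [← hV] at hc
      have hu0 := sum_two_pow_int_nonneg p.1
      have hu1 := sum_two_pow_int_le p.1
      have hu0' := sum_two_pow_int_nonneg p'.1
      have hu1' := sum_two_pow_int_le p'.1
      have hc' : ∑ i ∈ p'.1, (2:ℤ)^(i:ℕ) - ∑ i ∈ p.1, (2:ℤ)^(i:ℕ) = ((2:ℤ)^f + 1) * c := by
        linear_combination hc
      have hc0 : c = 0 := by
        by_contra hcc
        rcases (by omega : 1 ≤ c ∨ c ≤ -1) with h | h
        · nlinarith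
        · nlinarith
      rw [hc0, mul_zero] at hc'
      have h1 : p.1 = p'.1 := sum_two_pow_fin_inj (by omega)
      exact Prod.ext h1 hV
    · rintro v ⟨hv0, hv1, hv3⟩
      obtain ⟨V, hVs⟩ := exists_finset_sum f v hv0 hv1
      set u : ℤ := (n + 2*((2:ℤ)^f - 1) - 3*v) % ((2:ℤ)^f + 1) with hu
      have hu0 : 0 ≤ u := Int.emod_nonneg _ (ne_of_gt hqpos)
      have hu1 : u < (2:ℤ)^f + 1 := Int.emod_lt_of_pos _ hqpos
      have hune : u ≠ (2:ℤ)^f := by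
        intro hue
        apply hv3
        have hmod : Int.ModEq ((2:ℤ)^f + 1)
            (n + 2*((2:ℤ)^f - 1) - 3*v) ((2:ℤ)^f) := by
          have : ((2:ℤ)^f) % ((2:ℤ)^f + 1) = (2:ℤ)^f := Int.emod_eq_of_lt (by omega) (by omega)
          show _ % _ = _ % _
          rw [this, ← hu]
          exact hue
        obtain ⟨c, hc⟩ := hmod.dvd
        exact Int.modEq_iff_dvd.2 ⟨1 - c, by linear_combination -hc⟩
      obtain ⟨U, hUs⟩ := exists_finset_sum f u hu0 (by omega)
      refine ⟨(U, V), ?_, by simpa using hVs⟩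
      show Int.ModEq ((2:ℤ)^f + 1) (n + 2*((2:ℤ)^f - 1))
          (∑ i ∈ U, (2:ℤ)^(i:ℕ) + 3 * ∑ i ∈ V, (2:ℤ)^(i:ℕ))
      rw [hUs, hVs]
      have hmm : Int.ModEq ((2:ℤ)^f + 1) u (n + 2*((2:ℤ)^f - 1) - 3*v) := by
        show _ % _ = _ % _
        rw [hu, Int.emod_emod_of_dvd _ dvd_rfl]
      obtain ⟨c, hc⟩ := hmm.dvd
      exact Int.modEq_iff_dvd.2 ⟨-c, by linear_combination -hc⟩
  rw [← hbij.image_eq, Set.ncard_image_of_injOn hbij.injOn]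


lemma three_dvd_even {f : ℕ} (hf : Even f) : (3:ℤ) ∣ 2^f - 1 := by
  have h : (2:ℤ)^f ≡ (-1)^f [ZMOD 3] := Int.ModEq.pow f (by decide)
  rw [hf.neg_one_pow] at h
  obtain ⟨c, hc⟩ := h.dvd
  exact ⟨-c, by linarith⟩

lemma three_dvd_odd {f : ℕ} (hf : Odd f) : (3:ℤ) ∣ 2^f + 1 := by
  have h : (2:ℤ)^f ≡ (-1)^f [ZMOD 3] := Int.ModEq.pow f (by decide)
  rw [hf.neg_one_pow] at h
  obtain ⟨c, hc⟩ := h.dvd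
  exact ⟨-c, by linarith⟩

lemma finalT3 (f : ℕ) (hf : 0 < f) (n : ℤ) (hn : ¬ ((2 : ℤ) ^ f + 1) ∣ n) :
    (Even f → (T3 f n).ncard = 2 ^ f - 1) ∧
    (Odd f → ¬ (3 : ℤ) ∣ n → (T3 f n).ncard = 2 ^ f) ∧
    (Odd f → (3 : ℤ) ∣ n → (T3 f n).ncard = 2 ^ f - 3) := by
  have hq2 : (2:ℤ) ≤ 2^f := by
    calc (2:ℤ) = 2^1 := by norm_num
      _ ≤ 2^f := pow_le_pow_right₀ (by norm_num) hf
  have hqpos : (0:ℤ) < 2^f + 1 := by positivity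
  set P : ℤ → Prop :=
    fun v => (3*v) % ((2:ℤ)^f + 1) = (n + 2*((2:ℤ)^f - 1) + 1) % ((2:ℤ)^f + 1) with hP
  have hset : T3 f n = ↑((Finset.Ico (0:ℤ) ((2:ℤ)^f)).filter (fun v => ¬ P v)) := by
    ext v
    simp only [T3, Set.mem_setOf_eq, Finset.coe_filter, Finset.mem_Ico, hP]
    constructor
    · rintro ⟨h0, h1, h2⟩; exact ⟨⟨h0, by omega⟩, h2⟩
    · rintro ⟨⟨h0, h1⟩, h2⟩; exact ⟨h0, by omega, h2⟩
  have hncard : (T3 f n).ncard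
      = ((Finset.Ico (0:ℤ) ((2:ℤ)^f)).filter (fun v => ¬ P v)).card := by
    rw [hset, Set.ncard_coe_finset]
  have hpart := Finset.card_filter_add_card_filter_not
    (s := Finset.Ico (0:ℤ) ((2:ℤ)^f)) (p := P)
  have hIco : (Finset.Ico (0:ℤ) ((2:ℤ)^f)).card = 2^f := by
    rw [Int.card_Ico, sub_zero, show (2:ℤ)^f = ((2^f : ℕ) : ℤ) by push_cast; ring,
      Int.toNat_natCast]
  -- the top residue is not a solution
  have hPtop : ¬ P ((2:ℤ)^f) := by
    intro hp
    rw [hP] at hp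
    obtain ⟨c, hc⟩ := Int.modEq_iff_dvd.1 hp
    exact hn ⟨c + 1, by linear_combination hc⟩
  have hGext : ((Finset.Ico (0:ℤ) ((2:ℤ)^f + 1)).filter P).card
      = ((Finset.Ico (0:ℤ) ((2:ℤ)^f)).filter P).card := by
    rw [show Finset.Ico (0:ℤ) ((2:ℤ)^f + 1)
        = Finset.Ico (0:ℤ) ((2:ℤ)^f) ∪ Finset.Ico ((2:ℤ)^f) ((2:ℤ)^f + 1) from
      (Finset.Ico_union_Ico_eq_Ico (by positivity) (by omega)).symm]
    rw [Finset.filter_union, Finset.card_union_of_disjoint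
      (Finset.disjoint_filter_filter (Finset.Ico_disjoint_Ico_consecutive 0 ((2:ℤ)^f) ((2:ℤ)^f+1)))]
    have : (Finset.Ico ((2:ℤ)^f) ((2:ℤ)^f + 1)).filter P = ∅ := by
      rw [Finset.filter_eq_empty_iff]
      intro v hv
      have : v = (2:ℤ)^f := by
        have := Finset.mem_Ico.1 hv
        omega
      rw [this]
      exact hPtop
    rw [this]
    simp
  refine ⟨?_, ?_, ?_⟩
  · intro hfe
    obtain ⟨k, hk⟩ := three_dvd_even hfe
    have hx : (3*(k+1)) % ((2:ℤ)^f + 1) = 1 % ((2:ℤ)^f + 1) :=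
      Int.modEq_iff_dvd.2 ⟨-1, by linear_combination hk⟩
    have hG := card_filter_three_inv ((2:ℤ)^f + 1) (n + 2*((2:ℤ)^f - 1) + 1) (k+1) hqpos hx
    rw [hGext] at hG
    omega
  · intro hfo hn3
    have h3q := three_dvd_odd hfo
    have h3c : ¬ (3:ℤ) ∣ (n + 2*((2:ℤ)^f - 1) + 1) := by omega
    have hG := card_filter_three_nodvd ((2:ℤ)^f + 1) (n + 2*((2:ℤ)^f - 1) + 1) h3q h3c
    rw [hGext] at hG
    omega
  · intro hfo hn3
    obtain ⟨d, hd⟩ := three_dvd_odd hfo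
    obtain ⟨e, he⟩ := hn3
    have hdpos : (0:ℤ) < d := by omega
    have hme : n + 2*((2:ℤ)^f - 1) + 1 = 3*(e + 2*d - 1) := by omega
    have hG : ((Finset.Ico (0:ℤ) ((2:ℤ)^f + 1)).filter P).card = 3 := by
      simp only [hP]
      simp only [hme, hd]
      exact card_filter_three_dvd d (e + 2*d - 1) hdpos
    rw [hGext] at hG
    omega


/-- Suppose `ℓ = 2` and `n` is not divisible by `2^f + 1`.  Then
`N(n) = 2^f − 1` if `f` is even; `N(n) = 2^f` if `f` is odd and `3 ∤ n`;
and `N(n) = 2^f − 3` if `f` is odd and `3 ∣ n`. -/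
theorem stmt9 (f : ℕ) (hf : 0 < f) (n : ℤ) (hn : ¬ ((2 : ℤ) ^ f + 1) ∣ n) :
    (Even f → (Tset f n).ncard = 2 ^ f - 1) ∧
    (Odd f → ¬ (3 : ℤ) ∣ n → (Tset f n).ncard = 2 ^ f) ∧
    (Odd f → (3 : ℤ) ∣ n → (Tset f n).ncard = 2 ^ f - 3) := by
  have hchain : (Tset f n).ncard = (T3 f n).ncard := by
    rw [stepA f hf n, stepB f n, stepC f hf n]
  obtain ⟨h1, h2, h3⟩ := finalT3 f hf n hn
  exact ⟨fun he => by rw [hchain]; exact h1 he,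
    fun ho hd => by rw [hchain]; exact h2 ho hd,
    fun ho hd => by rw [hchain]; exact h3 ho hd⟩

end Stmt9
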